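/- Let $\sigma \in S_n$ be $I$-reduced, where $I = \{s_1,\ldots,s_{n-1}\} \setminus \{s_{k_1+1},\ldots,s_{k_r+1}\}$ with $0 \leq k_1 < \ldots < k_r < n-1$ satisfying $k_i = n-1-k_{r+1-i}$ (and $k_1 \neq 0$). Let $F(\sigma) = w_0\sigma w_0$. Suppose there exists $u$ in the parabolic subgroup $W_I$ generated by $I$ such that $u \sigma F(u)^{-1} \leq s_{k_1+1}s_{k_1+2}\cdots s_{n-1}$ in the Bruhat order. Then $\sigma(\{1,\ldots,k_i\}) \subseteq \{1,\ldots,k_i+1\}$ for all $1 \leq i \leq r$. -/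

import Mathlib

/- Statement 16: if `σ` is `I`-reduced and `uσF(u)⁻¹ ≤ s_{k₁+1}⋯s_{n-1}` in the
Bruhat order for some `u ∈ W_I`, then `σ({1,…,k_i}) ⊆ {1,…,k_i+1}` for all `i`.
Conventions: 1-based `s_j` is `simpleRefl n (j-1)`; `ℓ` is the inversion count;
the Bruhat order is given by the subword property. -/

/-- The simple reflection `s_{i+1}` (1-based): swap of 0-based positions `i`, `i+1`. -/
def simpleRefl (n i : ℕ) : Equiv.Perm (Fin n) :=
  if h : i + 1 < n then Equiv.swap ⟨i, Nat.lt_of_succ_lt h⟩ ⟨i + 1, h⟩ else 1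

/-- The Coxeter length of a permutation of `Fin n`: its number of inversions. -/
def lenPerm {n : ℕ} (σ : Equiv.Perm (Fin n)) : ℕ :=
  (Finset.univ.filter fun p : Fin n × Fin n => p.1 < p.2 ∧ σ p.2 < σ p.1).card

/-- The Bruhat order on `Sₙ`, via the subword property: `u ≤ v` iff `u` is the
product of a subword of some reduced word for `v` (words in 0-based indices). -/
def BruhatLE (n : ℕ) (u v : Equiv.Perm (Fin n)) : Prop :=
  ∃ L : List ℕ, (∀ j ∈ L, j + 1 < n) ∧ (L.map (simpleRefl n)).prod = v ∧
    L.length = lenPerm v ∧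
    ∃ L' : List ℕ, L'.Sublist L ∧ (L'.map (simpleRefl n)).prod = u

/-- The subset `I = S \ {s_{k₁+1},…,s_{k_r+1}}` of simple reflections. -/
def Iset (n r : ℕ) (k : Fin r → ℕ) : Set (Equiv.Perm (Fin n)) :=
  {p | ∃ j : ℕ, 1 ≤ j ∧ j ≤ n - 1 ∧ (∀ i : Fin r, j ≠ k i + 1) ∧
    p = simpleRefl n (j - 1)}

lemma swap_val {n : ℕ} (a b z : Fin n) :
    (Equiv.swap a b z).val = if z = a then (b : ℕ) else if z = b then (a : ℕ) else z := by
  rw [Equiv.swap_apply_def]; split_ifs <;> rfl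

lemma simpleRefl_val (n j : ℕ) (x : Fin n) :
    (simpleRefl n j x).val =
      if j + 1 < n then (if x.val = j then j + 1 else if x.val = j + 1 then j else x.val)
      else x.val := by
  rw [simpleRefl]
  rcases Nat.lt_or_ge (j+1) n with h|h
  · rw [dif_pos h, if_pos h, swap_val]
    split_ifs <;> simp_all [Fin.ext_iff]
  · rw [dif_neg (by omega), if_neg (by omega)]; rfl

lemma swap_lt {n : ℕ} {a b x y : Fin n} (hab : (a : ℕ) + 1 = b) (hxy : x < y)
    (hne : ¬((x : ℕ) = a ∧ (y : ℕ) = b)) : Equiv.swap a b x < Equiv.swap a b y := by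
  rw [Fin.lt_def] at *
  rw [swap_val, swap_val]
  simp only [Fin.ext_iff] at *
  split_ifs <;> omega

lemma lenPerm_mul_swap_of_lt {n : ℕ} (π : Equiv.Perm (Fin n)) (a b : Fin n)
    (hab : (a : ℕ) + 1 = b) (h : π a < π b) :
    lenPerm (π * Equiv.swap a b) = lenPerm π + 1 := by
  classical
  set s := Equiv.swap a b with hs
  set A := (Finset.univ.filter fun p : Fin n × Fin n => p.1 < p.2 ∧ (π * s) p.2 < (π * s) p.1)
    with hA
  set B := (Finset.univ.filter fun p : Fin n × Fin n => p.1 < p.2 ∧ π p.2 < π p.1) with hB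
  have hsa : s a = b := Equiv.swap_apply_left a b
  have hsb : s b = a := Equiv.swap_apply_right a b
  have haneb : a ≠ b := by simp [Fin.ext_iff]; omega
  have hq : ((a, b) : Fin n × Fin n) ∈ A := by
    simp only [hA, Finset.mem_filter, Finset.mem_univ, true_and]
    refine ⟨by rw [Fin.lt_def]; omega, ?_⟩
    show π (s b) < π (s a)
    rw [hsa, hsb]; exact h
  have key : (A.erase (a, b)).card = B.card := by
    apply Finset.card_bij' (fun p _ => (s p.1, s p.2)) (fun p _ => (s p.1, s p.2))
    · intro p hp
      simp only [Finset.mem_erase, hA, Finset.mem_filter, Finset.mem_univ, true_and] at hp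
      obtain ⟨hpne, hplt, hpinv⟩ := hp
      simp only [hB, Finset.mem_filter, Finset.mem_univ, true_and]
      constructor
      · apply swap_lt hab hplt
        intro ⟨h1, h2⟩
        exact hpne (by ext <;> simp [Fin.ext_iff, h1, h2])
      · exact hpinv
    · intro p hp
      simp only [hB, Finset.mem_filter, Finset.mem_univ, true_and] at hp
      obtain ⟨hplt, hpinv⟩ := hp
      have hpne : ¬((p.1 : ℕ) = a ∧ (p.2 : ℕ) = b) := by
        intro ⟨h1, h2⟩
        have : p.1 = a := Fin.ext h1
        have : p.2 = b := Fin.ext h2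
        apply absurd hpinv
        simp only [‹p.1 = a›, ‹p.2 = b›, not_lt]
        exact le_of_lt h
      simp only [Finset.mem_erase, hA, Finset.mem_filter, Finset.mem_univ, true_and]
      refine ⟨?_, swap_lt hab hplt hpne, ?_⟩
      · intro hcon
        have h1 : s p.1 = a := congrArg Prod.fst hcon
        have h2 : s p.2 = b := congrArg Prod.snd hcon
        have : p.1 = s a := by rw [← h1]; simp [hs]
        have h1' : p.1 = b := by rwa [hsa] at this
        have : p.2 = s b := by rw [← h2]; simp [hs]
        have h2' : p.2 = a := by rwa [hsb] at this
        rw [h1', h2', Fin.lt_def] at hplt; omega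
      · show π (s (s p.2)) < π (s (s p.1))
        simp only [hs, Equiv.swap_apply_self]
        exact hpinv
    · intro p hp; ext <;> simp [hs]
    · intro p hp; ext <;> simp [hs]
  have : A.card = (A.erase (a, b)).card + 1 := (Finset.card_erase_add_one hq).symm
  show A.card = B.card + 1
  omega

lemma lenPerm_mul_swap_of_gt {n : ℕ} (π : Equiv.Perm (Fin n)) (a b : Fin n)
    (hab : (a : ℕ) + 1 = b) (h : π b < π a) :
    lenPerm π = lenPerm (π * Equiv.swap a b) + 1 := by
  have h2 : (π * Equiv.swap a b) a < (π * Equiv.swap a b) b := by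
    show π (Equiv.swap a b a) < π (Equiv.swap a b b)
    rw [Equiv.swap_apply_left, Equiv.swap_apply_right]; exact h
  have := lenPerm_mul_swap_of_lt (π * Equiv.swap a b) a b hab h2
  rwa [mul_assoc, Equiv.swap_mul_self, mul_one] at this

lemma lenPerm_mul_swap {n : ℕ} (π : Equiv.Perm (Fin n)) (a b : Fin n)
    (hab : (a : ℕ) + 1 = b) :
    lenPerm (π * Equiv.swap a b) = lenPerm π + 1 ∧ π a < π b ∨
      lenPerm π = lenPerm (π * Equiv.swap a b) + 1 ∧ π b < π a := by
  rcases lt_trichotomy (π a) (π b) with h|h|h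
  · exact Or.inl ⟨lenPerm_mul_swap_of_lt π a b hab h, h⟩
  · exact absurd (π.injective h) (by simp [Fin.ext_iff]; omega)
  · exact Or.inr ⟨lenPerm_mul_swap_of_gt π a b hab h, h⟩

lemma lenPerm_one {n : ℕ} : lenPerm (1 : Equiv.Perm (Fin n)) = 0 := by
  rw [lenPerm, Finset.card_eq_zero, Finset.filter_eq_empty_iff]
  intro p _
  simp only [Equiv.Perm.one_apply, not_and, not_lt]
  exact le_of_lt

lemma simpleRefl_eq_swap {n j : ℕ} (h : j + 1 < n) :
    simpleRefl n j = Equiv.swap ⟨j, Nat.lt_of_succ_lt h⟩ ⟨j + 1, h⟩ := dif_pos h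

lemma lenPerm_word_le {n : ℕ} (L : List ℕ) :
    lenPerm ((L.map (simpleRefl n)).prod) ≤ L.length := by
  induction L using List.reverseRecOn with
  | nil => simp [lenPerm_one]
  | append_singleton L j ih =>
    rw [List.map_append, List.prod_append, List.map_singleton, List.prod_singleton,
      List.length_append, List.length_singleton]
    rcases Nat.lt_or_ge (j + 1) n with h|h
    · rw [simpleRefl_eq_swap h]
      rcases lenPerm_mul_swap ((L.map (simpleRefl n)).prod) ⟨j, Nat.lt_of_succ_lt h⟩ ⟨j+1, h⟩ rfl
        with ⟨heq, _⟩|⟨heq, _⟩ <;> omega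
    · rw [simpleRefl, dif_neg (by omega), mul_one]; omega

def cyc (n a m : ℕ) : Equiv.Perm (Fin n) :=
  ((List.range (m - a)).map fun j => simpleRefl n (a + j)).prod

lemma cyc_succ {n a m : ℕ} (ham : a ≤ m) :
    cyc n a (m + 1) = cyc n a m * simpleRefl n m := by
  rw [cyc, cyc, Nat.succ_sub ham, List.range_succ, List.map_append, List.prod_append,
    List.map_singleton, List.prod_singleton, Nat.add_sub_cancel' ham]

lemma cyc_apply (n a : ℕ) : ∀ m, a ≤ m → m ≤ n - 1 → ∀ x : Fin n,
    ((cyc n a m) x).val =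
      if x.val < a then x.val
      else if x.val < m then x.val + 1
      else if x.val = m then a
      else x.val := by
  intro m
  induction m with
  | zero =>
    intro ha _ x
    have : a = 0 := Nat.le_zero.mp ha
    subst this
    show ((1 : Equiv.Perm (Fin n)) x).val = _
    rw [Equiv.Perm.one_apply]
    split_ifs <;> omega
  | succ m ih =>
    intro ha hm x
    rcases Nat.lt_or_ge m a with h|h
    · -- a = m + 1
      have hae : a = m + 1 := by omega
      have : cyc n a (m+1) = 1 := by rw [cyc, hae, Nat.sub_self]; rfl
      rw [this, Equiv.Perm.one_apply]
      split_ifs <;> omega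
    · rw [cyc_succ h]
      show ((cyc n a m) (simpleRefl n (m) x)).val = _
      have hx := simpleRefl_val n m x
      rw [if_pos (by omega : m + 1 < n)] at hx
      have hy := ih h (by omega) (simpleRefl n m x)
      rw [hx] at hy
      have hxn : x.val < n := x.isLt
      rw [hy]
      split_ifs <;> omega

lemma cyc_descent {n a m j : ℕ} (ha : a ≤ m) (hm : m ≤ n - 1) (hj : j + 1 < n)
    (h : ((cyc n a m) ⟨j + 1, hj⟩).val < ((cyc n a m) ⟨j, by omega⟩).val) : j + 1 = m := by
  have h1 := cyc_apply n a m ha hm ⟨j + 1, hj⟩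
  have h2 := cyc_apply n a m ha hm ⟨j, by omega⟩
  have e1 : (⟨j + 1, hj⟩ : Fin n).val = j + 1 := rfl
  have e2 : (⟨j, by omega⟩ : Fin n).val = j := rfl
  rw [e1] at h1; rw [e2] at h2
  rw [h1, h2] at h
  split_ifs at h <;> omega

lemma cyc_unique (n a : ℕ) : ∀ m, a ≤ m → m ≤ n - 1 → ∀ L : List ℕ,
    (∀ j ∈ L, j + 1 < n) → (L.map (simpleRefl n)).prod = cyc n a m →
    L.length = lenPerm (cyc n a m) → L = (List.range (m - a)).map (a + ·) := by
  intro m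
  induction m with
  | zero =>
    intro ha _ L _ _ hlen
    have : a = 0 := Nat.le_zero.mp ha
    subst this
    have hc : cyc n 0 0 = 1 := by rw [cyc, Nat.sub_self]; rfl
    rw [hc, lenPerm_one, List.length_eq_zero_iff] at hlen
    simp [hlen]
  | succ m ih =>
    intro ha hm L hdom hprod hlen
    rcases Nat.lt_or_ge m a with hma|hma
    · have hae : a = m + 1 := by omega
      have hc : cyc n a (m + 1) = 1 := by rw [cyc, hae, Nat.sub_self]; rfl
      rw [hc, lenPerm_one, List.length_eq_zero_iff] at hlen
      rw [hlen, hae, Nat.sub_self]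
      rfl
    · have han : a < n := by omega
      rcases List.eq_nil_or_concat L with rfl|⟨L₀, j, rfl⟩
      · exfalso
        simp only [List.map_nil, List.prod_nil] at hprod
        have := cyc_apply n a (m + 1) ha hm ⟨a, han⟩
        rw [← hprod] at this
        simp only [Equiv.Perm.one_apply] at this
        split_ifs at this <;> omega
      · rw [List.concat_eq_append] at *
        have hj : j + 1 < n := hdom j (by simp)
        have hdom₀ : ∀ i ∈ L₀, i + 1 < n := fun i hi => hdom i (by simp [hi])
        set π₀ := (L₀.map (simpleRefl n)).prod with hπ₀
        rw [List.map_append, List.prod_append, List.map_singleton, List.prod_singleton]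
          at hprod
        rw [List.length_append, List.length_singleton] at hlen
        have hle : lenPerm π₀ ≤ L₀.length := lenPerm_word_le L₀
        rw [simpleRefl_eq_swap hj] at hprod
        set aj : Fin n := ⟨j, Nat.lt_of_succ_lt hj⟩
        set bj : Fin n := ⟨j + 1, hj⟩
        have hπ₀eq : π₀ = cyc n a (m + 1) * Equiv.swap aj bj := by
          rw [← hprod, mul_assoc, Equiv.swap_mul_self, mul_one]
        rcases lenPerm_mul_swap π₀ aj bj rfl with ⟨heq, hlt⟩|⟨heq, _⟩
        · rw [hprod] at heq
          have hdesc : ((cyc n a (m+1)) bj).val < ((cyc n a (m+1)) aj).val := by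
            have h1 : π₀ aj = cyc n a (m+1) bj := by
              rw [hπ₀eq]; show cyc n a (m+1) (Equiv.swap aj bj aj) = _
              rw [Equiv.swap_apply_left]
            have h2 : π₀ bj = cyc n a (m+1) aj := by
              rw [hπ₀eq]; show cyc n a (m+1) (Equiv.swap aj bj bj) = _
              rw [Equiv.swap_apply_right]
            rw [h1, h2] at hlt
            exact hlt
          have hjm : j + 1 = m + 1 := cyc_descent ha hm hj hdesc
          have hjem : j = m := by omega
          subst hjem
          have hπ₀c : π₀ = cyc n a j := by
            rw [hπ₀eq, cyc_succ hma, simpleRefl_eq_swap hj, mul_assoc,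
              Equiv.swap_mul_self, mul_one]
          have hlen₀ : L₀.length = lenPerm (cyc n a j) := by
            rw [hπ₀c] at heq hle
            omega
          have := ih hma (by omega) L₀ hdom₀ hπ₀c hlen₀
          rw [this, Nat.succ_sub hma, List.range_succ, List.map_append]
          congr 1
          simp [Nat.add_sub_cancel' hma]
        · exfalso
          rw [hprod] at heq
          omega

lemma inc_word_bound {n : ℕ} : ∀ L : List ℕ, L.Pairwise (· < ·) → ∀ x : Fin n,
    (((L.map (simpleRefl n)).prod x).val ≤ x.val + 1) ∧
    ((((L.map (simpleRefl n)).prod x).val = x.val + 1) → ∃ b ∈ L, b ≤ x.val) := by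
  intro L
  induction L with
  | nil => intro _ x; simp
  | cons b L ih =>
    intro hpw x
    have hpw' : L.Pairwise (· < ·) := hpw.tail
    have hball : ∀ c ∈ L, b < c := fun c hc => (List.pairwise_cons.mp hpw).1 c hc
    obtain ⟨ihle, iheq⟩ := ih hpw' x
    rw [List.map_cons, List.prod_cons]
    simp only [Equiv.Perm.mul_apply]
    set y := (L.map (simpleRefl n)).prod x with hy
    have hv := simpleRefl_val n b y
    rcases Nat.lt_or_ge (y.val) (x.val + 1) with hc|hc
    · -- y ≤ x
      constructor
      · rw [hv]; split_ifs <;> omega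
      · intro heq
        rw [hv] at heq
        split_ifs at heq <;> try omega
        · exact ⟨b, by simp, by omega⟩
    · -- y = x + 1
      have hyx : y.val = x.val + 1 := by omega
      obtain ⟨c, hcL, hcx⟩ := iheq hyx
      have hbc : b < c := hball c hcL
      constructor
      · rw [hv]; split_ifs <;> omega
      · intro _; exact ⟨c, by simp [hcL], hcx⟩

lemma closure_pres {n r : ℕ} (k : Fin r → ℕ) :
    ∀ u ∈ Subgroup.closure (Iset n r k), ∀ (i : Fin r) (x : Fin n),
      ((u x).val ≤ k i ↔ x.val ≤ k i) := by
  intro u hu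
  induction hu using Subgroup.closure_induction with
  | mem p hp =>
    obtain ⟨j, hj1, hj2, hjk, rfl⟩ := hp
    intro i x
    have hv := simpleRefl_val n (j - 1) x
    rw [if_pos (by omega : j - 1 + 1 < n)] at hv
    have := hjk i
    rw [hv]
    split_ifs <;> omega
  | one => intro i x; simp
  | mul p q hp hq ihp ihq =>
    intro i x
    rw [Equiv.Perm.mul_apply]
    exact (ihp i (q x)).trans (ihq i x)
  | inv p hp ihp =>
    intro i x
    have := ihp i (p⁻¹ x)
    rw [Equiv.Perm.inv_def, Equiv.apply_symm_apply] at this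
    exact this.symm

theorem image_bound_of_bruhat_le (n r : ℕ) (hn : 2 ≤ n) (hr : 0 < r)
    (k : Fin r → ℕ) (hmono : StrictMono k) (hk1 : k ⟨0, hr⟩ ≠ 0)
    (hkn : ∀ i, k i < n - 1)
    (hsym : ∀ i : Fin r, k i = n - 1 - k i.rev)
    (σ : Equiv.Perm (Fin n))
    (hred : ∀ v ∈ Subgroup.closure (Iset n r k),
      lenPerm (v * σ) = lenPerm v + lenPerm σ)
    (u : Equiv.Perm (Fin n)) (hu : u ∈ Subgroup.closure (Iset n r k))
    (hle : BruhatLE n (u * σ * (Fin.revPerm * u * Fin.revPerm)⁻¹)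
      (((List.range (n - 1 - k ⟨0, hr⟩)).map fun j =>
        simpleRefl n (k ⟨0, hr⟩ + j)).prod)) :
    ∀ (i : Fin r) (x : Fin n), x.val < k i → (σ x).val < k i + 1 := by
  intro i x hx
  set a := k ⟨0, hr⟩ with hadef
  have ha1 : 1 ≤ a := Nat.pos_of_ne_zero hk1
  have han : a < n - 1 := hkn _
  obtain ⟨L, hdom, hprod, hlen, L', hsub, hL'⟩ := hle
  have hprod' : (L.map (simpleRefl n)).prod = cyc n a (n - 1) := hprod
  have hlen' : L.length = lenPerm (cyc n a (n - 1)) := hlen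
  have hL : L = (List.range (n - 1 - a)).map (a + ·) :=
    cyc_unique n a (n - 1) (le_of_lt han) le_rfl L hdom hprod' hlen'
  have hpwL : L.Pairwise (· < ·) := by
    rw [hL]
    exact List.pairwise_lt_range.map (a + ·) (fun p q h => Nat.add_lt_add_left h a)
  have hpwL' : L'.Pairwise (· < ·) := hpwL.sublist hsub
  set F := Fin.revPerm * u * Fin.revPerm with hF
  have hwb : ∀ z : Fin n, ((u * σ * F⁻¹) z).val ≤ z.val + 1 := by
    intro z
    have := (inc_word_bound L' hpwL' z).1
    rwa [hL'] at this
  have hpres := closure_pres k u hu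
  -- k i.rev = n - 1 - k i
  have hki : k i.rev = n - 1 - k i := by
    have := hsym i.rev
    rwa [Fin.rev_rev] at this
  -- F x has value < k i
  have hFx : (F x).val < k i := by
    have hFxx : F x = (u (Fin.revPerm x)).rev := by
      simp [hF, Equiv.Perm.mul_apply]
    have hrx : (Fin.revPerm x : Fin n).val = n - (x.val + 1) := by
      simp [Fin.val_rev]
    have h1 : ¬ ((Fin.revPerm x : Fin n).val ≤ k i.rev) := by
      rw [hrx, hki]
      have := hkn i
      omega
    have h2 : ¬ ((u (Fin.revPerm x)).val ≤ k i.rev) :=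
      fun hc => h1 ((hpres i.rev (Fin.revPerm x)).mp hc)
    rw [hki] at h2
    have hlt := (u (Fin.revPerm x)).isLt
    rw [hFxx, Fin.val_rev]
    have := hkn i
    omega
  have hσx : σ x = u⁻¹ ((u * σ * F⁻¹) (F x)) := by
    simp [Equiv.Perm.mul_apply]
  have hw : ((u * σ * F⁻¹) (F x)).val ≤ k i := by
    have := hwb (F x)
    omega
  have : (σ x).val ≤ k i := by
    rw [hσx]
    have h3 := hpres i (u⁻¹ ((u * σ * F⁻¹) (F x)))
    rw [Equiv.Perm.inv_def, Equiv.apply_symm_apply] at h3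
    exact h3.mp hw
  omega
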